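/- Let α, β > 1 be real numbers with 1/α + 1/β = 1. Then for all real numbers a, b ≥ 0 one has 0 ≤ a^α/α + b^β/β − a·b ≤ −(a^{α−1} − b)·(b^{β−1} − a). -/

import Mathlib

theorem young_power_inequality_with_upper_bound
    (α β : ℝ) (hα : 1 < α) (hβ : 1 < β) (hconj : 1 / α + 1 / β = 1)
    (a b : ℝ) (ha : 0 ≤ a) (hb : 0 ≤ b) :
    0 ≤ a ^ α / α + b ^ β / β - a * b ∧
    a ^ α / α + b ^ β / β - a * b ≤ -(a ^ (α - 1) - b) * (b ^ (β - 1) - a) := by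
  have hα0 : (0:ℝ) < α := lt_trans one_pos hα
  have hβ0 : (0:ℝ) < β := lt_trans one_pos hβ
  have hpq : α.HolderConjugate β := ⟨by rw [← one_div, ← one_div, inv_one]; exact hconj, hα0, hβ0⟩
  have h1 : a * b ≤ a ^ α / α + b ^ β / β :=
    Real.young_inequality_of_nonneg ha hb hpq
  refine ⟨by linarith, ?_⟩
  -- key exponent identities
  have hαβ : (α - 1) * β = α := by field_simp at hconj ⊢; nlinarith
  have hβα : (β - 1) * α = β := by field_simp at hconj ⊢; nlinarith
  have h2 : b ^ (β - 1) * a ^ (α - 1) ≤ (b ^ (β - 1)) ^ α / α + (a ^ (α - 1)) ^ β / β :=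
    Real.young_inequality_of_nonneg (Real.rpow_nonneg hb _) (Real.rpow_nonneg ha _) hpq
  rw [show ((b ^ (β - 1)) ^ α) = b ^ β by rw [← Real.rpow_mul hb, hβα],
      show ((a ^ (α - 1)) ^ β) = a ^ α by rw [← Real.rpow_mul ha, hαβ]] at h2
  have haux : α + β = α * β := by field_simp at hconj; linarith
  have ea : a ^ α / α + a ^ α / β = a ^ α := by
    field_simp
    linear_combination a ^ α * haux
  have eb : b ^ β / α + b ^ β / β = b ^ β := by
    field_simp
    linear_combination b ^ β * haux
  have haa : a ^ (α - 1) * a = a ^ α := by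
    rw [show α = (α - 1) + 1 by ring, Real.rpow_add' ha (by linarith), Real.rpow_one]; ring_nf
  have hbb : b ^ (β - 1) * b = b ^ β := by
    rw [show β = (β - 1) + 1 by ring, Real.rpow_add' hb (by linarith), Real.rpow_one]; ring_nf
  nlinarith [h2, haa, hbb]
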